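/- Let e be the H^{-1} energy density associated to f as above. Then ∂e(0) = (−∞, 0]. -/

import Mathlib

open Filter Set Topology MeasureTheory

noncomputable section
open scoped Classical

/-- Convexity for extended-real-valued functions on `ℝ`. -/
def EConvex (f : ℝ → EReal) : Prop :=
  ∀ x y t : ℝ, 0 ≤ t → t ≤ 1 →
    f (t * x + (1 - t) * y) ≤ (t : EReal) * f x + ((1 - t : ℝ) : EReal) * f y

/-- Subdifferential of an extended-real-valued function:
`∂g(x) = { p : p(y − x) + g(x) ≤ g(y) for all y }`. -/
def esubdiff (g : ℝ → EReal) (x : ℝ) : Set ℝ :=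
  {p : ℝ | ∀ y : ℝ, ((p * (y - x) : ℝ) : EReal) + g x ≤ g y}

/-- The `H^{-1}` energy density associated to `f`:
`e(a) = a·f(a) − 2∫₀ᵃ f(s) ds` for `a ∈ dom f`, `+∞` otherwise. -/
def eDen (f : ℝ → EReal) (a : ℝ) : EReal :=
  if f a = ⊤ then ⊤
  else ((a * (f a).toReal - 2 * ∫ s in (0 : ℝ)..a, (f s).toReal : ℝ) : EReal)

section Aux
variable {f : ℝ → EReal}

/-- `f` never takes the value `⊥`. -/
lemma statement7_ne_bot (hconv : EConvex f) (hlsc : LowerSemicontinuous f)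
    (hf0 : f 0 = 0) (hneg : ∀ a : ℝ, a < 0 → f a = ⊤) : ∀ x, f x ≠ ⊥ := by
  intro z hz
  rcases lt_trichotomy z 0 with h | h | h
  · rw [hneg z h] at hz; exact (top_ne_bot hz)
  · rw [h, hf0] at hz; exact absurd hz (by simp)
  · -- f = ⊥ on (0, z]
    have hball : ∀ s : ℝ, 0 < s → s ≤ z → f s = ⊥ := by
      intro s hs hsz
      have ht0 : (0:ℝ) ≤ s / z := le_of_lt (div_pos hs h)
      have ht1 : s / z ≤ 1 := div_le_one_of_le₀ hsz h.le
      have := hconv z 0 (s / z) ht0 ht1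
      rw [mul_zero, add_zero, div_mul_cancel₀ _ h.ne', hz, hf0, mul_zero, add_zero,
        EReal.coe_mul_bot_of_pos (div_pos hs h)] at this
      exact le_bot_iff.mp this
    have hev : ∀ᶠ s in 𝓝 (0:ℝ), (⊥ : EReal) < f s := by
      apply hlsc 0; rw [hf0]; exact bot_lt_iff_ne_bot.mpr (by simp)
    rcases Metric.eventually_nhds_iff.mp hev with ⟨δ, hδ, hδ'⟩
    have hs : 0 < min (δ/2) z := lt_min (by linarith) h
    have h1 : f (min (δ/2) z) = ⊥ := hball _ hs (min_le_right _ _)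
    have h2 : (⊥ : EReal) < f (min (δ/2) z) := by
      apply hδ'
      rw [Real.dist_eq, sub_zero, abs_of_pos hs]
      exact lt_of_le_of_lt (min_le_left _ _) (by linarith)
    rw [h1] at h2; exact lt_irrefl _ h2

/-- chord bound -/
lemma statement7_chord (hconv : EConvex f) (hf0 : f 0 = 0) {s c : ℝ} (hc : 0 < c)
    (hs0 : 0 ≤ s) (hsc : s ≤ c) : f s ≤ ((s / c : ℝ) : EReal) * f c := by
  have := hconv c 0 (s / c) (div_nonneg hs0 hc.le) (div_le_one_of_le₀ hsc hc.le)
  rwa [mul_zero, add_zero, div_mul_cancel₀ _ hc.ne', hf0, mul_zero, add_zero] at this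

lemma statement7_finite (hconv : EConvex f) (hlsc : LowerSemicontinuous f)
    (hf0 : f 0 = 0) (hneg : ∀ a : ℝ, a < 0 → f a = ⊤) {s c : ℝ} (hc : 0 < c)
    (hfc : f c ≠ ⊤) (hs0 : 0 ≤ s) (hsc : s ≤ c) :
    f s = (((f s).toReal : ℝ) : EReal) ∧ (f s).toReal ≤ (s / c) * (f c).toReal := by
  have hbot := statement7_ne_bot hconv hlsc hf0 hneg
  have hch := statement7_chord hconv hf0 hc hs0 hsc
  rw [← EReal.coe_toReal hfc (hbot c), ← EReal.coe_mul] at hch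
  have hstop : f s ≠ ⊤ := ne_top_of_le_ne_top (EReal.coe_ne_top _) hch
  refine ⟨(EReal.coe_toReal hstop (hbot s)).symm, ?_⟩
  exact EReal.toReal_le_toReal hch (hbot s) (EReal.coe_ne_top _)

end Aux

section Aux2
variable {f : ℝ → EReal}

lemma statement7_convexOn (hconv : EConvex f) (hlsc : LowerSemicontinuous f)
    (hf0 : f 0 = 0) (hneg : ∀ a : ℝ, a < 0 → f a = ⊤) {c : ℝ} (hc : 0 < c)
    (hfc : f c ≠ ⊤) : ConvexOn ℝ (Icc 0 c) (fun s => (f s).toReal) := by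
  have hfin := fun {s} hs0 hsc =>
    statement7_finite hconv hlsc hf0 hneg hc hfc (s := s) hs0 hsc
  refine ⟨convex_Icc _ _, ?_⟩
  rintro x ⟨hx0, hxc⟩ y ⟨hy0, hyc⟩ a b ha hb hab
  have hb' : b = 1 - a := by linarith
  subst hb'
  have hz0 : 0 ≤ a * x + (1 - a) * y := by nlinarith
  have hzc : a * x + (1 - a) * y ≤ c := by nlinarith
  have h := hconv x y a ha (by linarith)
  rw [(hfin hx0 hxc).1, (hfin hy0 hyc).1, (hfin hz0 hzc).1, ← EReal.coe_mul, ← EReal.coe_mul,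
    ← EReal.coe_add] at h
  simpa using EReal.coe_le_coe_iff.mp h

lemma statement7_integrable (hconv : EConvex f) (hlsc : LowerSemicontinuous f)
    (hf0 : f 0 = 0) (hneg : ∀ a : ℝ, a < 0 → f a = ⊤) {c : ℝ} (hc : 0 < c)
    (hfc : f c ≠ ⊤) :
    IntervalIntegrable (fun s => (f s).toReal) volume 0 c := by
  set g : ℝ → ℝ := fun s => (f s).toReal with hg
  have hfin := fun {s} hs0 hsc =>
    statement7_finite hconv hlsc hf0 hneg hc hfc (s := s) hs0 hsc
  have hconvg := statement7_convexOn hconv hlsc hf0 hneg hc hfc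
  have hcont : ContinuousOn g (Ioo 0 c) := by
    have := hconvg.continuousOn_interior
    rwa [interior_Icc] at this
  rw [intervalIntegrable_iff, uIoc_of_le hc.le]
  rw [integrableOn_Ioc_iff_integrableOn_Ioo]
  have hmeas : AEStronglyMeasurable g (volume.restrict (Ioo 0 c)) :=
    hcont.aestronglyMeasurable measurableSet_Ioo
  set M : ℝ := 2 * |g (c/2)| + |g c| with hM
  have hbdd : ∀ s ∈ Ioo 0 c, ‖g s‖ ≤ M := by
    rintro s ⟨hs0, hsc⟩
    have h1 : g s ≤ (s / c) * g c := (hfin hs0.le hsc.le).2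
    have hsub : g (c - s) ≤ ((c - s) / c) * g c := (hfin (by linarith) (by linarith)).2
    have hmid : g (c/2) ≤ (1/2) * g s + (1/2) * g (c - s) := by
      have h := hconv s (c - s) (1/2) (by norm_num) (by norm_num)
      have hpt : (1/2 : ℝ) * s + (1 - 1/2) * (c - s) = c / 2 := by ring
      rw [hpt, (hfin hs0.le hsc.le).1, (hfin (show (0:ℝ) ≤ c - s by linarith)
        (show c - s ≤ c by linarith)).1,
        (hfin (show (0:ℝ) ≤ c/2 by linarith) (show c/2 ≤ c by linarith)).1,
        ← EReal.coe_mul, ← EReal.coe_mul] at h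
      norm_num at h ⊢
      exact_mod_cast h
    have hsc' : 0 ≤ s / c := div_nonneg hs0.le hc.le
    have hsc1 : s / c ≤ 1 := div_le_one_of_le₀ hsc.le hc.le
    have hsc2 : 0 ≤ (c - s) / c := div_nonneg (by linarith) hc.le
    have hsc3 : (c - s) / c ≤ 1 := div_le_one_of_le₀ (by linarith) hc.le
    have habs : g c ≤ |g c| := le_abs_self _
    have habs0 : 0 ≤ |g c| := abs_nonneg _
    have hub : g s ≤ |g c| := by nlinarith
    have hub2 : g (c - s) ≤ |g c| := by nlinarith
    have hlb : -(2 * |g (c/2)| + |g c|) ≤ g s := by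
      have := neg_abs_le (g (c/2)); linarith
    have habs1 : 0 ≤ |g (c/2)| := abs_nonneg _
    rw [Real.norm_eq_abs, abs_le]
    constructor <;> rw [hM] <;> linarith
  refine ⟨hmeas, ?_⟩
  apply MeasureTheory.HasFiniteIntegral.restrict_of_bounded (C := M)
    (measure_Ioo_lt_top)
  exact (ae_restrict_iff' measurableSet_Ioo).mpr (Filter.Eventually.of_forall hbdd)

end Aux2


section Aux3
variable {f : ℝ → EReal}

lemma statement7_eDen_zero (hf0 : f 0 = 0) : eDen f 0 = 0 := by
  simp [eDen, hf0, intervalIntegral.integral_same]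

lemma statement7_eDen_nonneg (hconv : EConvex f) (hlsc : LowerSemicontinuous f)
    (hf0 : f 0 = 0) (hneg : ∀ a : ℝ, a < 0 → f a = ⊤) {y : ℝ} (hy : 0 < y) :
    (0 : EReal) ≤ eDen f y := by
  by_cases hfy : f y = ⊤
  · simp [eDen, hfy]
  have hfin := fun {s} hs0 hsc =>
    statement7_finite hconv hlsc hf0 hneg hy hfy (s := s) hs0 hsc
  set g : ℝ → ℝ := fun s => (f s).toReal with hg
  have hint : IntervalIntegrable g volume 0 y :=
    statement7_integrable hconv hlsc hf0 hneg hy hfy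
  have hintR : IntervalIntegrable (fun s => s * ((f y).toReal / y)) volume 0 y := by
    apply Continuous.intervalIntegrable; continuity
  have hmono : (∫ s in (0:ℝ)..y, g s) ≤ ∫ s in (0:ℝ)..y, s * ((f y).toReal / y) := by
    apply intervalIntegral.integral_mono_on hy.le hint hintR
    intro s hs
    have := (hfin hs.1 hs.2).2
    calc g s ≤ s / y * (f y).toReal := this
      _ = s * ((f y).toReal / y) := by ring
  have hval : (∫ s in (0:ℝ)..y, s * ((f y).toReal / y)) = y * (f y).toReal / 2 := by
    rw [intervalIntegral.integral_mul_const, integral_id]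
    field_simp
    ring
  rw [hval] at hmono
  have hkey : (0:ℝ) ≤ y * (f y).toReal - 2 * ∫ s in (0:ℝ)..y, (f s).toReal := by
    have : (∫ s in (0:ℝ)..y, (f s).toReal) = ∫ s in (0:ℝ)..y, g s := rfl
    rw [this]; linarith
  simp only [eDen, hfy, if_false]
  exact_mod_cast hkey

end Aux3

/-- The subdifferential at `0` of the `H^{-1}` energy density is `(−∞, 0]`. -/
theorem statement7 (f : ℝ → EReal) (hconv : EConvex f)
    (hlsc : LowerSemicontinuous f) (hf0 : f 0 = 0)
    (hneg : ∀ a : ℝ, a < 0 → f a = ⊤)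
    (hdom : (interior {a : ℝ | f a ≠ ⊤}).Nonempty) :
    esubdiff (eDen f) 0 = Set.Iic (0 : ℝ) := by
  have he0 : eDen f 0 = 0 := statement7_eDen_zero hf0
  ext p
  simp only [esubdiff, mem_setOf_eq, mem_Iic]
  constructor
  · intro hp
    -- choose a₀ > 0 in the interior of the domain
    obtain ⟨a₀, ha₀mem⟩ := hdom
    have hfa₀ : f a₀ ≠ ⊤ := interior_subset ha₀mem
    have ha₀ : 0 < a₀ := by
      rcases Metric.mem_nhds_iff.mp (mem_interior_iff_mem_nhds.mp ha₀mem) with ⟨ε, hε, hball⟩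
      by_contra h
      push_neg at h
      have hmem : a₀ - ε/2 ∈ Metric.ball a₀ ε := by
        rw [Metric.mem_ball, Real.dist_eq,
          show a₀ - ε/2 - a₀ = -(ε/2) by ring, abs_neg, abs_of_pos (by linarith)]
        linarith
      have := hball hmem
      exact this (hneg _ (by linarith))
    suffices h3 : ∀ ε : ℝ, 0 < ε → p ≤ 3*ε by
      by_contra hcon
      push_neg at hcon
      have := h3 (p/6) (by linarith)
      linarith
    intro ε hε
    have hev : ∀ᶠ s in 𝓝 (0:ℝ), ((-ε : ℝ) : EReal) < f s := by
      apply hlsc 0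
      rw [hf0]
      exact_mod_cast (by linarith : (-ε:ℝ) < 0)
    rcases Metric.eventually_nhds_iff.mp hev with ⟨δ, hδ, hδ'⟩
    set C : ℝ := |(f a₀).toReal| with hC
    have hC0 : 0 ≤ C := abs_nonneg _
    set y : ℝ := min (min (δ/2) a₀) (ε * a₀ / (C + 1)) with hy
    have hy0 : 0 < y := lt_min (lt_min (by linarith) ha₀) (by positivity)
    have hya₀ : y ≤ a₀ := le_trans (min_le_left _ _) (min_le_right _ _)
    have hyδ : y < δ := lt_of_le_of_lt (le_trans (min_le_left _ _) (min_le_left _ _))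
      (by linarith)
    have hfin := fun {s} hs0 hsc =>
      statement7_finite hconv hlsc hf0 hneg ha₀ hfa₀ (s := s) hs0 hsc
    have hfy : f y ≠ ⊤ := by
      rw [(hfin hy0.le hya₀).1]; exact EReal.coe_ne_top _
    -- upper bound for g y
    have hgy : (f y).toReal ≤ ε := by
      have h1 := (hfin hy0.le hya₀).2
      have h2 : y / a₀ * (f a₀).toReal ≤ y / a₀ * C :=
        mul_le_mul_of_nonneg_left (le_abs_self _) (by positivity)
      have hyC : y * (C + 1) ≤ ε * a₀ := by
        have h4 : y ≤ ε * a₀ / (C + 1) := min_le_right _ _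
        rw [le_div_iff₀ (by positivity)] at h4
        exact h4
      have h3 : y / a₀ * C ≤ ε := by
        rw [div_mul_eq_mul_div, div_le_iff₀ ha₀]
        nlinarith
      linarith
    -- lower bound on the integrand
    have hlb : ∀ s ∈ Icc (0:ℝ) y, -ε ≤ (f s).toReal := by
      intro s hs
      have hsδ : dist s 0 < δ := by
        rw [Real.dist_eq, sub_zero, abs_of_nonneg hs.1]
        exact lt_of_le_of_lt hs.2 hyδ
      have h5 := hδ' hsδ
      rw [(hfin hs.1 (hs.2.trans hya₀)).1] at h5
      exact le_of_lt (EReal.coe_lt_coe_iff.mp h5)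
    have hint : IntervalIntegrable (fun s => (f s).toReal) volume 0 y :=
      statement7_integrable hconv hlsc hf0 hneg hy0 hfy
    have hlow : -ε * y ≤ ∫ s in (0:ℝ)..y, (f s).toReal := by
      have := intervalIntegral.integral_mono_on hy0.le intervalIntegrable_const hint hlb
      rw [intervalIntegral.integral_const] at this
      simp at this ⊢
      linarith
    have hpy := hp y
    rw [he0, add_zero, sub_zero] at hpy
    simp only [eDen, hfy, if_false] at hpy
    have hreal : p * y ≤ y * (f y).toReal - 2 * ∫ s in (0:ℝ)..y, (f s).toReal :=
      EReal.coe_le_coe_iff.mp hpy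
    have : p * y ≤ (3*ε) * y := by nlinarith
    exact le_of_mul_le_mul_right this hy0
  · intro hp y
    rcases lt_trichotomy y 0 with h | h | h
    · have : eDen f y = ⊤ := by simp [eDen, hneg y h]
      rw [this]; exact le_top
    · subst h; simp [he0]
    · rw [he0, add_zero, sub_zero]
      have h1 : ((p * y : ℝ) : EReal) ≤ (0 : EReal) := by
        have : p * y ≤ 0 := mul_nonpos_iff.mpr (Or.inr ⟨hp, h.le⟩)
        exact_mod_cast this
      exact h1.trans (statement7_eDen_nonneg hconv hlsc hf0 hneg h)
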